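/- Let G be a uv-straight graph and let Q be a monotone xy-path of G with h(x) ≤ h(y). Then G contains a monotone ux-path and a monotone yv-path, and for every monotone ux-path P and every monotone yv-path R of G, the concatenation P ∪ Q ∪ R is a monotone uv-path of G (in particular, a monotone uv-path of G containing Q exists). -/

import Mathlib

open SimpleGraph

variable {V : Type*}

/-- A walk is monotone if its vertices have pairwise distinct heights. -/
def MonoWalk (G : SimpleGraph V) (u : V) {x y : V} (W : G.Walk x y) : Prop :=
  (W.support.map (fun z => G.dist u z)).Nodup

/-- `P` is a shortest `x`-`y` path of `G`. -/
def IsShortestPath (G : SimpleGraph V) {x y : V} (P : G.Walk x y) : Prop :=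
  P.IsPath ∧ P.length = G.dist x y

/-- `P` is an induced path of `G`: a path that equals the subgraph of `G`
induced by its vertex set. -/
def IsInducedPath (G : SimpleGraph V) {x y : V} (P : G.Walk x y) : Prop :=
  P.IsPath ∧ ∀ a b : V, a ∈ P.support → b ∈ P.support → G.Adj a b → P.toSubgraph.Adj a b

/-- A `uv`-trail of `G`: an induced `uv`-path of `G` that is not a shortest
`uv`-path of `G`. -/
def IsTrailPath (G : SimpleGraph V) (u v : V) (P : G.Walk u v) : Prop :=
  IsInducedPath G P ∧ ¬ IsShortestPath G P

/-- A shortest `uv`-trail of `G`: a `uv`-trail of minimum number of edges. -/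
def IsShortestTrail (G : SimpleGraph V) (u v : V) (P : G.Walk u v) : Prop :=
  IsTrailPath G u v P ∧ ∀ Q : G.Walk u v, IsTrailPath G u v Q → P.length ≤ Q.length

/-- `G` is `uv`-straight: every vertex lies on a shortest `uv`-path of `G`. -/
def Straight (G : SimpleGraph V) (u v : V) : Prop :=
  ∀ x : V, ∃ P : G.Walk u v, IsShortestPath G P ∧ x ∈ P.support

/-- Vertex sets `X` and `Y` are anticomplete in `G`: they are disjoint and there
is no edge of `G` between them. -/
def Anticomplete (G : SimpleGraph V) (X Y : Set V) : Prop :=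
  ∀ x ∈ X, ∀ y ∈ Y, x ≠ y ∧ ¬ G.Adj x y

/-- `x` and `y` are connected in the subgraph of `G` induced by `A`. -/
def ConnIn (G : SimpleGraph V) (A : Set V) (x y : V) : Prop :=
  ∃ W : G.Walk x y, ∀ z ∈ W.support, z ∈ A

/-- The closed neighborhood `N_G[A]` of a vertex set `A`. -/
def closedNbhd (G : SimpleGraph V) (A : Set V) : Set V :=
  {y | y ∈ A ∨ ∃ x ∈ A, G.Adj x y}

/-- `(s, t)` is the twist pair of the `uv`-path `P`: `P[u,s]` is the maximal
monotone prefix of `P` and `P[t,v]` is the maximal monotone suffix of `P`. -/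
def IsTwistPair [DecidableEq V] (G : SimpleGraph V) (u v : V) (P : G.Walk u v)
    (s t : V) : Prop :=
  ∃ (hs : s ∈ P.support) (ht : t ∈ P.support),
    MonoWalk G u (P.takeUntil s hs) ∧ MonoWalk G u (P.dropUntil t ht) ∧
    (∀ (s' : V) (hs' : s' ∈ P.support), MonoWalk G u (P.takeUntil s' hs') →
      (P.takeUntil s' hs').length ≤ (P.takeUntil s hs).length) ∧
    (∀ (t' : V) (ht' : t' ∈ P.support), MonoWalk G u (P.dropUntil t' ht') →
      (P.dropUntil t' ht').length ≤ (P.dropUntil t ht).length)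

/-- `(W1, W2)` is a pair of wings for the quadruple `(a, b, c, d)` in `G`
(with respect to heights measured from `u`): `W1` is a monotone `c`-`a*`-path
containing `a`, `W2` is a monotone `b`-`d*`-path containing `d`,
`h(a*) + 1 = h(a) = h(b) ≤ h(c) = h(d) = h(d*) - 1`, `W1 - c` is anticomplete
to `W2`, and `W1` is anticomplete to `W2 - b`. -/
def IsWingPair (G : SimpleGraph V) (u : V) (a b c d : V) {astar dstar : V}
    (W1 : G.Walk c astar) (W2 : G.Walk b dstar) : Prop :=
  W1.IsPath ∧ W2.IsPath ∧ MonoWalk G u W1 ∧ MonoWalk G u W2 ∧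
  a ∈ W1.support ∧ d ∈ W2.support ∧
  G.dist u astar + 1 = G.dist u a ∧ G.dist u a = G.dist u b ∧
  G.dist u b ≤ G.dist u c ∧ G.dist u c = G.dist u d ∧
  G.dist u d + 1 = G.dist u dstar ∧
  Anticomplete G {x | x ∈ W1.support ∧ x ≠ c} {x | x ∈ W2.support} ∧
  Anticomplete G {x | x ∈ W1.support} {x | x ∈ W2.support ∧ x ≠ b}

/-- The quadruple `(a, b, c, d)` is winged in `G`. -/
def Winged (G : SimpleGraph V) (u : V) (a b c d : V) : Prop :=
  ∃ (astar dstar : V) (W1 : G.Walk c astar) (W2 : G.Walk b dstar),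
    IsWingPair G u a b c d W1 W2

/-- The quadruple `(a, b, c, d)` admits a pair of wings `(W1, W2)` in `G` with
`W1` anticomplete to `W2`. -/
def WingedAnti (G : SimpleGraph V) (u : V) (a b c d : V) : Prop :=
  ∃ (astar dstar : V) (W1 : G.Walk c astar) (W2 : G.Walk b dstar),
    IsWingPair G u a b c d W1 W2 ∧
    Anticomplete G {x | x ∈ W1.support} {x | x ∈ W2.support}

/-- For a `uv`-trail `P` of a `uv`-straight graph `G` with twist pair `(s, t)`,
a monotone `uc`-path `S` of `G` with `h(c) = h(s)` is a sidetrack for `P` if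
(S1) `G` contains a monotone `tv`-path `T` with `S - c` anticomplete to `T` and
`S` anticomplete to `T - t`, and (S2) `S` contains the vertex `a` of `P[u,s]`
with `h(a) = h(t)`. -/
def IsSidetrack [DecidableEq V] (G : SimpleGraph V) (u v : V) (P : G.Walk u v)
    (s t : V) {c : V} (S : G.Walk u c) : Prop :=
  S.IsPath ∧ MonoWalk G u S ∧ G.dist u c = G.dist u s ∧
  (∃ (T : G.Walk t v), T.IsPath ∧ MonoWalk G u T ∧
    Anticomplete G {x | x ∈ S.support ∧ x ≠ c} {x | x ∈ T.support} ∧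
    Anticomplete G {x | x ∈ S.support} {x | x ∈ T.support ∧ x ≠ t}) ∧
  (∀ (hs : s ∈ P.support) (a : V),
    a ∈ (P.takeUntil s hs).support → G.dist u a = G.dist u t → a ∈ S.support)

section Aux

variable (G : SimpleGraph V) (u : V)

/-- Triangle-type inequality: going from `u` to `a` and then along a walk. -/
lemma aux_triangle {a b : V} (hr : G.Reachable u a) (W : G.Walk a b) :
    G.dist u b ≤ G.dist u a + W.length := by
  obtain ⟨P, hP⟩ := hr.exists_walk_length_eq_dist
  calc G.dist u b ≤ (P.append W).length := SimpleGraph.dist_le _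
    _ = G.dist u a + W.length := by rw [SimpleGraph.Walk.length_append, hP]

/-- Heights of adjacent vertices differ by at most one. -/
lemma aux_adj_step (hreach : ∀ z, G.Reachable u z) {a c : V} (hadj : G.Adj a c) :
    G.dist u c ≤ G.dist u a + 1 := by
  simpa using aux_triangle G u (hreach a) hadj.toWalk

/-- Discrete intermediate value theorem along a walk. -/
lemma aux_ivt (hreach : ∀ z, G.Reachable u z) {a b : V} (W : G.Walk a b) (m : ℕ)
    (h1 : G.dist u a ≤ m) (h2 : m ≤ G.dist u b) :
    ∃ z ∈ W.support, G.dist u z = m := by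
  induction W with
  | nil => exact ⟨_, by simp, le_antisymm h1 h2⟩
  | @cons a c b hadj W' ih =>
    by_cases hma : m ≤ G.dist u a
    · exact ⟨a, by simp, le_antisymm h1 hma⟩
    · push_neg at hma
      have hc : G.dist u c ≤ m := le_trans (aux_adj_step G u hreach hadj) hma
      obtain ⟨z, hz, hzm⟩ := ih hc h2
      exact ⟨z, by simp [hz], hzm⟩

/-- A walk from `a` whose heights realize the distances has heights
`h a, h a + 1, …`. -/
lemma aux_heights (hreach : ∀ z, G.Reachable u z) {a b : V} (W : G.Walk a b)
    (hlen : G.dist u a + W.length = G.dist u b) :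
    W.support.map (fun z => G.dist u z) = List.range' (G.dist u a) (W.length + 1) := by
  induction W with
  | nil => simp
  | @cons a c b hadj W' ih =>
    have h1 : G.dist u c ≤ G.dist u a + 1 := aux_adj_step G u hreach hadj
    have h2 : G.dist u b ≤ G.dist u c + W'.length := aux_triangle G u (hreach c) W'
    simp only [SimpleGraph.Walk.length_cons] at hlen
    have hc : G.dist u c = G.dist u a + 1 := by omega
    have hlen' : G.dist u c + W'.length = G.dist u b := by omega
    rw [SimpleGraph.Walk.support_cons, List.map_cons, ih hlen', hc]
    simp [List.range'_succ]

/-- A monotone walk from lower to higher height is in fact a shortest-type walk: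
its length equals the height difference. -/
lemma aux_mono_length (hreach : ∀ z, G.Reachable u z) {a b : V} (W : G.Walk a b)
    (hnd : (W.support.map (fun z => G.dist u z)).Nodup)
    (hab : G.dist u a ≤ G.dist u b) :
    G.dist u a + W.length = G.dist u b := by
  induction W with
  | nil => simp
  | @cons a c b hadj W' ih =>
    rw [SimpleGraph.Walk.support_cons, List.map_cons, List.nodup_cons] at hnd
    obtain ⟨hnotmem, hnd'⟩ := hnd
    have h1 : G.dist u c ≤ G.dist u a + 1 := aux_adj_step G u hreach hadj
    have hne : G.dist u c ≠ G.dist u a := by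
      intro h
      exact hnotmem (h ▸ List.mem_map_of_mem (f := fun z => G.dist u z) W'.start_mem_support)
    have hgt : G.dist u a < G.dist u c := by
      rcases lt_or_gt_of_ne hne with hlt | hgt
      · obtain ⟨z, hz, hzm⟩ := aux_ivt G u hreach W' (G.dist u a) hlt.le hab
        exact absurd (hzm ▸ List.mem_map_of_mem (f := fun z => G.dist u z) hz) hnotmem
      · exact hgt
    have hc : G.dist u c = G.dist u a + 1 := by omega
    have hcb : G.dist u c ≤ G.dist u b := by
      by_contra hlt
      push_neg at hlt
      have hba : G.dist u b = G.dist u a := by omega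
      exact hnotmem (hba ▸ List.mem_map_of_mem (f := fun z => G.dist u z) W'.end_mem_support)
    have := ih hnd' hcb
    simp only [SimpleGraph.Walk.length_cons]
    omega

end Aux

/-- In a `uv`-straight graph `G`, for every monotone `xy`-path
`Q` with `h(x) ≤ h(y)`, there exist a monotone `ux`-path and a monotone
`yv`-path of `G`, and for every monotone `ux`-path `P` and monotone `yv`-path
`R` of `G` the concatenation `P ∪ Q ∪ R` is a monotone `uv`-path of `G`. -/
theorem statement5 [Fintype V] [DecidableEq V] (G : SimpleGraph V) (u v : V)
    (hstraight : Straight G u v)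
    (x y : V) (Q : G.Walk x y) (hQpath : Q.IsPath) (hQmono : MonoWalk G u Q)
    (hxy : G.dist u x ≤ G.dist u y) :
    (∃ P : G.Walk u x, P.IsPath ∧ MonoWalk G u P) ∧
    (∃ R : G.Walk y v, R.IsPath ∧ MonoWalk G u R) ∧
    (∀ (P : G.Walk u x) (R : G.Walk y v),
      P.IsPath → MonoWalk G u P → R.IsPath → MonoWalk G u R →
      (P.append (Q.append R)).IsPath ∧ MonoWalk G u (P.append (Q.append R))) := by
  classical
  have hreach : ∀ z, G.Reachable u z := by
    intro z
    obtain ⟨W0, _, hz⟩ := hstraight z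
    exact ⟨W0.takeUntil z hz⟩
  have hself : G.dist u u = 0 := SimpleGraph.dist_self
  -- Every vertex has height at most `dist u v`.
  have hle_v : ∀ z : V, G.dist u z ≤ G.dist u v := by
    intro z
    obtain ⟨W0, ⟨_, hlen⟩, hz⟩ := hstraight z
    calc G.dist u z ≤ (W0.takeUntil z hz).length := SimpleGraph.dist_le _
      _ ≤ W0.length := SimpleGraph.Walk.length_takeUntil_le _ _
      _ = G.dist u v := hlen
  -- For any vertex `z` on a shortest `uv`-path `W0`, the prefix and suffix are
  -- shortest, giving the existence statements.
  have hexP : ∃ P : G.Walk u x, P.IsPath ∧ MonoWalk G u P := by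
    obtain ⟨W0, ⟨hp, hlen⟩, hz⟩ := hstraight x
    refine ⟨W0.takeUntil x hz, hp.takeUntil hz, ?_⟩
    have hsum : (W0.takeUntil x hz).length + (W0.dropUntil x hz).length = G.dist u v := by
      rw [← SimpleGraph.Walk.length_append, SimpleGraph.Walk.take_spec, hlen]
    have hT : G.dist u x ≤ (W0.takeUntil x hz).length := SimpleGraph.dist_le _
    have hD : G.dist u v ≤ G.dist u x + (W0.dropUntil x hz).length :=
      aux_triangle G u (hreach x) _
    have hlenP : G.dist u u + (W0.takeUntil x hz).length = G.dist u x := by omega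
    unfold MonoWalk
    rw [aux_heights G u hreach _ hlenP]
    exact List.nodup_range'
  have hexR : ∃ R : G.Walk y v, R.IsPath ∧ MonoWalk G u R := by
    obtain ⟨W0, ⟨hp, hlen⟩, hz⟩ := hstraight y
    refine ⟨W0.dropUntil y hz, hp.dropUntil hz, ?_⟩
    have hsum : (W0.takeUntil y hz).length + (W0.dropUntil y hz).length = G.dist u v := by
      rw [← SimpleGraph.Walk.length_append, SimpleGraph.Walk.take_spec, hlen]
    have hT : G.dist u y ≤ (W0.takeUntil y hz).length := SimpleGraph.dist_le _
    have hD : G.dist u v ≤ G.dist u y + (W0.dropUntil y hz).length :=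
      aux_triangle G u (hreach y) _
    have hlenR : G.dist u y + (W0.dropUntil y hz).length = G.dist u v := by omega
    unfold MonoWalk
    rw [aux_heights G u hreach _ hlenR]
    exact List.nodup_range'
  refine ⟨hexP, hexR, ?_⟩
  intro P R hPpath hPmono hRpath hRmono
  set f : V → ℕ := fun z => G.dist u z with hf
  have hPx : G.dist u u + P.length = G.dist u x :=
    aux_mono_length G u hreach P hPmono (by omega)
  have hQy : G.dist u x + Q.length = G.dist u y :=
    aux_mono_length G u hreach Q hQmono hxy
  have hRv : G.dist u y + R.length = G.dist u v :=
    aux_mono_length G u hreach R hRmono (hle_v y)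
  set p := P.length with hp'
  set q := Q.length with hq'
  set r := R.length with hr'
  have hx' : G.dist u x = p := by omega
  have hy' : G.dist u y = p + q := by omega
  have mP : P.support.map f = List.range' 0 (p + 1) := by
    have := aux_heights G u hreach P hPx
    rwa [hself] at this
  have mQ : Q.support.map f = List.range' p (q + 1) := by
    have := aux_heights G u hreach Q hQy
    rwa [hx'] at this
  have mR : R.support.map f = List.range' (p + q) (r + 1) := by
    have := aux_heights G u hreach R hRv
    rwa [hy'] at this
  have mQt : Q.support.tail.map f = List.range' (p + 1) q := by
    have h1 := mQ
    rw [Q.support_eq_cons, List.map_cons, List.range'_succ] at h1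
    exact (List.cons_eq_cons.mp h1).2
  have mRt : R.support.tail.map f = List.range' (p + q + 1) r := by
    have h1 := mR
    rw [R.support_eq_cons, List.map_cons, List.range'_succ] at h1
    exact (List.cons_eq_cons.mp h1).2
  have hsup : (P.append (Q.append R)).support
      = P.support ++ (Q.support.tail ++ R.support.tail) := by
    rw [SimpleGraph.Walk.support_append, SimpleGraph.Walk.support_append,
      Q.support_eq_cons]
    simp
  have hmap : (P.append (Q.append R)).support.map f
      = List.range' 0 (p + 1) ++ (List.range' (p + 1) q ++ List.range' (p + q + 1) r) := by
    rw [hsup, List.map_append, List.map_append, mP, mQt, mRt]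
  have hnd : ((P.append (Q.append R)).support.map f).Nodup := by
    rw [hmap]
    rw [List.nodup_append, List.nodup_append]
    refine ⟨List.nodup_range', ⟨List.nodup_range', List.nodup_range', ?_⟩, ?_⟩
    · intro z hz w hz' hzw
      simp only [List.mem_range'_1] at hz hz'
      omega
    · intro z hz w hz' hzw
      simp only [List.mem_append, List.mem_range'_1] at hz hz'
      omega
  refine ⟨?_, hnd⟩
  rw [SimpleGraph.Walk.isPath_def]
  exact hnd.of_map f
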